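/- arXiv:1404.5535 — 2 statements merged into one kernel-verified Lean document; each statement's English description precedes it below -/
import Mathlib

section
/- The orthogonal group O(n) is a maximal compact subgroup of GL(n,ℝ): O(n) is a compact subgroup of GL(n,ℝ), and every compact subgroup H of GL(n,ℝ) with O(n) ⊆ H satisfies H = O(n). -/
open Matrix

/-- The orthogonal group `O(n) = {A ∈ GL(n,ℝ) : Aᵀ·A = 1}` as a subgroup of `GL(n,ℝ)`. -/
def orthogonalSubgroup (n : ℕ) : Subgroup (GL (Fin n) ℝ) where
  carrier := {g | ((g : GL (Fin n) ℝ) : Matrix (Fin n) (Fin n) ℝ)ᵀ *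
    ((g : GL (Fin n) ℝ) : Matrix (Fin n) (Fin n) ℝ) = 1}
  one_mem' := by simp
  mul_mem' := by
    intro a b ha hb
    simp only [Set.mem_setOf_eq] at *
    have h : ((a * b : GL (Fin n) ℝ) : Matrix (Fin n) (Fin n) ℝ)
        = (a : Matrix (Fin n) (Fin n) ℝ) * (b : Matrix (Fin n) (Fin n) ℝ) := rfl
    rw [h, Matrix.transpose_mul, Matrix.mul_assoc, ← Matrix.mul_assoc
      ((a : Matrix (Fin n) (Fin n) ℝ)ᵀ), ha, Matrix.one_mul, hb]
  inv_mem' := by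
    intro a ha
    simp only [Set.mem_setOf_eq] at *
    have h2 : (a : Matrix (Fin n) (Fin n) ℝ) * (a : Matrix (Fin n) (Fin n) ℝ)ᵀ = 1 :=
      mul_eq_one_comm.mp ha
    have h3 : ((a⁻¹ : GL (Fin n) ℝ) : Matrix (Fin n) (Fin n) ℝ)
        = (a : Matrix (Fin n) (Fin n) ℝ)ᵀ :=
      Units.inv_eq_of_mul_eq_one_right h2
    rw [h3, Matrix.transpose_transpose, h2]


lemma orthSet_compact (n : ℕ) :
    IsCompact {A : Matrix (Fin n) (Fin n) ℝ | Aᵀ * A = 1} := by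
  have hclosed : IsClosed {A : Matrix (Fin n) (Fin n) ℝ | Aᵀ * A = 1} :=
    isClosed_eq (continuous_id.matrix_transpose.matrix_mul continuous_id) continuous_const
  have hK : IsCompact {A : Matrix (Fin n) (Fin n) ℝ | ∀ i j, A i j ∈ Set.Icc (-1:ℝ) 1} := by
    have he : {A : Matrix (Fin n) (Fin n) ℝ | ∀ i j, A i j ∈ Set.Icc (-1:ℝ) 1} =
        Set.univ.pi fun _ : Fin n => (Set.univ.pi fun _ : Fin n => Set.Icc (-1:ℝ) 1) := by
      ext A
      exact ⟨fun h i _ j _ => h i j, fun h i j => h i (Set.mem_univ i) j (Set.mem_univ j)⟩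
    rw [he]
    exact isCompact_univ_pi fun _ => isCompact_univ_pi fun _ => isCompact_Icc
  refine hK.of_isClosed_subset hclosed ?_
  intro A hA i j
  have hdiag : ∑ k, A k j * A k j = 1 := by
    have := congrFun (congrFun hA j) j
    simpa [Matrix.mul_apply, Matrix.one_apply, Matrix.transpose_apply] using this
  have hle : A i j * A i j ≤ 1 := by
    rw [← hdiag]
    exact Finset.single_le_sum (fun k _ => mul_self_nonneg (A k j)) (Finset.mem_univ i)
  have habs : |A i j| ≤ 1 := by
    rw [← Real.sqrt_one]
    rw [← Real.sqrt_mul_self_eq_abs]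
    exact Real.sqrt_le_sqrt hle
  exact abs_le.mp habs

open scoped MatrixOrder in
lemma key (n : ℕ) (H : Subgroup (GL (Fin n) ℝ))
    (hHc : IsCompact ((fun g : GL (Fin n) ℝ => (g : Matrix (Fin n) (Fin n) ℝ)) ''
      (H : Set (GL (Fin n) ℝ))))
    (hOH : ∀ {u : GL (Fin n) ℝ},
      ((u : Matrix (Fin n) (Fin n) ℝ)ᵀ * (u : Matrix (Fin n) (Fin n) ℝ) = 1) → u ∈ H)
    (g : GL (Fin n) ℝ) (hg : g ∈ H) :
    ((g : Matrix (Fin n) (Fin n) ℝ)ᵀ * (g : Matrix (Fin n) (Fin n) ℝ) = 1) := by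
  set A : Matrix (Fin n) (Fin n) ℝ := (g : Matrix (Fin n) (Fin n) ℝ) with hAdef
  -- S = AᵀA is positive definite
  have hS : (Aᵀ * A).PosDef := by
    have h := Matrix.posSemidef_conjTranspose_mul_self A
    rw [Matrix.conjTranspose_eq_transpose_of_trivial] at h
    refine Matrix.PosDef.of_dotProduct_mulVec_pos h.1 (fun x hx => ?_)
    have hAx : A *ᵥ x ≠ 0 := by
      intro hz
      apply hx
      have hinj := Matrix.mulVec_injective_iff_isUnit.mpr g.isUnit
      exact hinj (by rw [hz, Matrix.mulVec_zero])
    have : star x ⬝ᵥ (Aᵀ * A) *ᵥ x = (A *ᵥ x) ⬝ᵥ (A *ᵥ x) := by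
      rw [← Matrix.mulVec_mulVec, Matrix.dotProduct_mulVec, Matrix.vecMul_transpose]
      simp
    rw [this]
    have := Matrix.dotProduct_self_star_pos_iff (v := A *ᵥ x) |>.mpr hAx
    simpa using this
  set P : Matrix (Fin n) (Fin n) ℝ := CFC.sqrt (Aᵀ * A) with hPdef
  have hP2 : P * P = Aᵀ * A := CFC.sqrt_mul_sqrt_self _ hS.posSemidef.nonneg
  have hPsd : P.PosSemidef := Matrix.nonneg_iff_posSemidef.mp (CFC.sqrt_nonneg _)
  have hPh : Pᵀ = P := by
    have := hPsd.1
    rwa [Matrix.IsHermitian, Matrix.conjTranspose_eq_transpose_of_trivial] at this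
  have hSunit : IsUnit (Aᵀ * A) :=
    ((Matrix.isUnit_transpose A).mpr g.isUnit).mul g.isUnit
  have hPunit : IsUnit P := by
    have hdet : IsUnit P.det := by
      have : P.det * P.det = (Aᵀ * A).det := by rw [← Matrix.det_mul, hP2]
      have hSdet : IsUnit (Aᵀ * A).det := (Matrix.isUnit_iff_isUnit_det _).mp hSunit
      exact isUnit_of_mul_isUnit_left (this ▸ hSdet)
    exact (Matrix.isUnit_iff_isUnit_det P).mpr hdet
  obtain ⟨pu, hpu⟩ := hPunit
  -- Q is the inverse of P; it is symmetric
  set Q : Matrix (Fin n) (Fin n) ℝ := ((pu⁻¹ : (Matrix (Fin n) (Fin n) ℝ)ˣ) :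
    Matrix (Fin n) (Fin n) ℝ) with hQdef
  have hPQ : P * Q = 1 := by rw [hQdef, ← hpu]; exact pu.mul_inv
  have hQP : Q * P = 1 := by rw [hQdef, ← hpu]; exact pu.inv_mul
  have hQsymm : Qᵀ = Q := by
    have h1 : Qᵀ * P = 1 := by
      have := congrArg Matrix.transpose hPQ
      rwa [Matrix.transpose_mul, hPh, Matrix.transpose_one] at this
    calc Qᵀ = Qᵀ * (P * Q) := by rw [hPQ, Matrix.mul_one]
    _ = (Qᵀ * P) * Q := by rw [Matrix.mul_assoc]
    _ = Q := by rw [h1, Matrix.one_mul]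
  -- the orthogonal part u = g * pu⁻¹ is in O(n), hence in H; so pu ∈ H
  set u : GL (Fin n) ℝ := g * pu⁻¹ with hudef
  have huO : ((u : Matrix (Fin n) (Fin n) ℝ))ᵀ * (u : Matrix (Fin n) (Fin n) ℝ) = 1 := by
    have huval : (u : Matrix (Fin n) (Fin n) ℝ) = A * Q := rfl
    rw [huval, Matrix.transpose_mul, hQsymm]
    calc Q * Aᵀ * (A * Q) = Q * (Aᵀ * A) * Q := by
          rw [Matrix.mul_assoc, Matrix.mul_assoc, Matrix.mul_assoc]
    _ = Q * (P * P) * Q := by rw [hP2]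
    _ = (Q * P) * (P * Q) := by rw [Matrix.mul_assoc, Matrix.mul_assoc, Matrix.mul_assoc]
    _ = 1 := by rw [hQP, hPQ, Matrix.one_mul]
  have hpuH : pu ∈ H := by
    have : pu = u⁻¹ * g := by rw [hudef]; group
    rw [this]
    exact H.mul_mem (H.inv_mem (hOH huO)) hg
  -- spectral theorem for P
  have hPherm : P.IsHermitian := hPsd.1
  set lam : Fin n → ℝ := hPherm.eigenvalues with hlamdef
  set V : Matrix (Fin n) (Fin n) ℝ := (hPherm.eigenvectorUnitary : Matrix (Fin n) (Fin n) ℝ)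
    with hVdef
  have hspec : P = V * Matrix.diagonal lam * Vᵀ := by
    have := hPherm.spectral_theorem
    rwa [Unitary.conjStarAlgAut_apply, RCLike.ofReal_real_eq_id, Function.id_comp, Matrix.star_eq_conjTranspose,
      Matrix.conjTranspose_eq_transpose_of_trivial] at this
  have hV1 : Vᵀ * V = 1 := by
    have := Matrix.mem_unitaryGroup_iff'.mp (hPherm.eigenvectorUnitary).2
    rwa [Matrix.star_eq_conjTranspose, Matrix.conjTranspose_eq_transpose_of_trivial] at this
  have hV2 : V * Vᵀ = 1 := by
    have := Matrix.mem_unitaryGroup_iff.mp (hPherm.eigenvectorUnitary).2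
    rwa [Matrix.star_eq_conjTranspose, Matrix.conjTranspose_eq_transpose_of_trivial] at this
  set v : GL (Fin n) ℝ := ⟨V, Vᵀ, hV2, hV1⟩ with hvdef
  have hvO : v ∈ H := hOH (by exact hV1)
  -- the diagonal unit d
  set d : GL (Fin n) ℝ := v⁻¹ * pu * v with hddef
  have hdH : d ∈ H := H.mul_mem (H.mul_mem (H.inv_mem hvO) hpuH) hvO
  have hdval : (d : Matrix (Fin n) (Fin n) ℝ) = Matrix.diagonal lam := by
    have h1 : (d : Matrix (Fin n) (Fin n) ℝ) = Vᵀ * P * V := by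
      simp only [hddef, Units.val_mul, hpu]; rfl
    rw [h1, hspec]
    calc Vᵀ * (V * Matrix.diagonal lam * Vᵀ) * V
        = (Vᵀ * V) * Matrix.diagonal lam * (Vᵀ * V) := by
          simp only [Matrix.mul_assoc]
    _ = Matrix.diagonal lam := by rw [hV1, Matrix.one_mul, Matrix.mul_one]
  -- eigenvalues are positive
  have hlampos : ∀ i, 0 < lam i := by
    intro i
    rcases lt_or_eq_of_le (hPsd.eigenvalues_nonneg i) with h | h
    · exact h
    · exfalso
      have hdet : P.det = ∏ i, lam i := by
        simpa using hPherm.det_eq_prod_eigenvalues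
      have : P.det ≠ 0 := by
        have := (Matrix.isUnit_iff_isUnit_det P).mp ⟨pu, hpu⟩
        exact this.ne_zero
      apply this
      rw [hdet]
      exact Finset.prod_eq_zero (Finset.mem_univ i) h.symm
  have hdinv : ((d⁻¹ : GL (Fin n) ℝ) : Matrix (Fin n) (Fin n) ℝ)
      = Matrix.diagonal (fun j => (lam j)⁻¹) := by
    apply Units.inv_eq_of_mul_eq_one_right
    rw [hdval, Matrix.diagonal_mul_diagonal]
    have : (fun j => lam j * (lam j)⁻¹) = fun _ : Fin n => (1 : ℝ) := by
      funext j; exact mul_inv_cancel₀ (hlampos j).ne'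
    rw [this, Matrix.diagonal_one]
  -- eigenvalues are 1 by compactness (boundedness of powers)
  have hlam1 : ∀ i, lam i = 1 := by
    intro i
    have hcont : Continuous fun B : Matrix (Fin n) (Fin n) ℝ => B i i :=
      continuous_apply_apply i i
    obtain ⟨C, hC⟩ := Bornology.IsBounded.exists_norm_le (hHc.image hcont).isBounded
    have hmem : ∀ w : GL (Fin n) ℝ, w ∈ H → |(w : Matrix (Fin n) (Fin n) ℝ) i i| ≤ C := by
      intro w hw
      have : ((w : Matrix (Fin n) (Fin n) ℝ) i i) ∈
          (fun B : Matrix (Fin n) (Fin n) ℝ => B i i) ''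
          ((fun g : GL (Fin n) ℝ => (g : Matrix (Fin n) (Fin n) ℝ)) ''
            (H : Set (GL (Fin n) ℝ))) := ⟨_, ⟨w, hw, rfl⟩, rfl⟩
      simpa [Real.norm_eq_abs] using hC _ this
    have hpow : ∀ k : ℕ, lam i ^ k ≤ C := by
      intro k
      have h1 := hmem (d ^ k) (pow_mem hdH k)
      rw [Units.val_pow_eq_pow_val, hdval, Matrix.diagonal_pow,
        Matrix.diagonal_apply_eq] at h1
      calc lam i ^ k ≤ |lam i ^ k| := le_abs_self _
      _ ≤ C := by simpa using h1
    have hpowinv : ∀ k : ℕ, (lam i)⁻¹ ^ k ≤ C := by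
      intro k
      have h1 := hmem (d⁻¹ ^ k) (pow_mem (H.inv_mem hdH) k)
      rw [Units.val_pow_eq_pow_val, hdinv, Matrix.diagonal_pow,
        Matrix.diagonal_apply_eq] at h1
      calc (lam i)⁻¹ ^ k ≤ |(lam i)⁻¹ ^ k| := le_abs_self _
      _ ≤ C := by simpa using h1
    by_contra hne
    rcases lt_or_gt_of_ne hne with hlt | hgt
    · have h1 : 1 < (lam i)⁻¹ := (one_lt_inv₀ (hlampos i)).mpr hlt
      obtain ⟨k, hk⟩ := pow_unbounded_of_one_lt C h1
      exact absurd (hpowinv k) (not_le.mpr hk)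
    · obtain ⟨k, hk⟩ := pow_unbounded_of_one_lt C hgt
      exact absurd (hpow k) (not_le.mpr hk)
  have hD1 : Matrix.diagonal lam = 1 := by
    have : lam = fun _ : Fin n => (1 : ℝ) := funext hlam1
    rw [this, Matrix.diagonal_one]
  have hP1 : P = 1 := by rw [hspec, hD1, Matrix.mul_one, hV2]
  rw [← hP2, hP1, Matrix.one_mul]

/-- `O(n)` is a maximal compact subgroup of `GL(n,ℝ)`: it is compact (as a set of
`n×n` real matrices), and every compact subgroup `H` of `GL(n,ℝ)` containing `O(n)`
equals `O(n)`. -/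
theorem orthogonal_maximal_compact (n : ℕ) :
    IsCompact ((fun g : GL (Fin n) ℝ => (g : Matrix (Fin n) (Fin n) ℝ)) ''
      (orthogonalSubgroup n : Set (GL (Fin n) ℝ))) ∧
    ∀ H : Subgroup (GL (Fin n) ℝ),
      IsCompact ((fun g : GL (Fin n) ℝ => (g : Matrix (Fin n) (Fin n) ℝ)) ''
        (H : Set (GL (Fin n) ℝ))) →
      orthogonalSubgroup n ≤ H → H = orthogonalSubgroup n := by
  constructor
  · have himg : (fun g : GL (Fin n) ℝ => (g : Matrix (Fin n) (Fin n) ℝ)) ''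
        (orthogonalSubgroup n : Set (GL (Fin n) ℝ))
        = {A : Matrix (Fin n) (Fin n) ℝ | Aᵀ * A = 1} := by
      ext A
      constructor
      · rintro ⟨g, hg, rfl⟩
        exact hg
      · intro hA
        have h2 : A * Aᵀ = 1 := mul_eq_one_comm.mp hA
        exact ⟨⟨A, Aᵀ, h2, hA⟩, hA, rfl⟩
    rw [himg]
    exact orthSet_compact n
  · intro H hHc hOH
    refine le_antisymm (fun g hg => ?_) hOH
    exact key n H hHc (fun {u} hu => hOH hu) g hg
end

section
/- Iwasawa decomposition of SL(n,ℝ): every g ∈ SL(n,ℝ) can be written uniquely as g = k·a·n where k ∈ SO(n), a is a diagonal n×n matrix with positive diagonal entries and determinant 1, and n is an upper triangular n×n real matrix with all diagonal entries equal to 1. -/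
open Matrix

/-- Conjugating a positive definite real matrix by an invertible matrix. -/
lemma posDef_conj_aux {S B : Matrix (Fin n) (Fin n) ℝ} (hS : S.PosDef)
    (hB : IsUnit B.det) : (Bᵀ * S * B).PosDef := by
  haveI := B.invertibleOfIsUnitDet hB
  refine PosDef.of_dotProduct_mulVec_pos ?_ ?_
  · have h := isHermitian_conjTranspose_mul_mul B hS.1
    rwa [conjTranspose_eq_transpose_of_trivial] at h
  · intro x hx
    have hBx : B *ᵥ x ≠ 0 := fun h => hx (by
      have := B.mulVec_injective_of_invertible (by simpa using h : B *ᵥ x = B *ᵥ 0)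
      simpa using this)
    have h := hS.dotProduct_mulVec_pos hBx
    rw [star_trivial] at h ⊢
    rwa [Matrix.mul_assoc, ← mulVec_mulVec, dotProduct_mulVec, vecMul_transpose,
      ← mulVec_mulVec]

/-- Cholesky-type decomposition: a positive definite real matrix `S` equals `Bᵀ * B`
with `B` upper triangular with positive diagonal. -/
lemma chol_exists (S : Matrix (Fin n) (Fin n) ℝ) (hS : S.PosDef) :
    ∃ B : Matrix (Fin n) (Fin n) ℝ, B.BlockTriangular (id : Fin n → Fin n) ∧
      (∀ i, 0 < B i i) ∧ Bᵀ * B = S := by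
  haveI : WellFoundedLT (Fin n) := inferInstance
  set L := LDL.lowerInv hS with hL
  haveI : Invertible L := by convert LDL.invertibleLowerInv hS using 2
  set U := Lᵀ with hUdef
  haveI : Invertible U := Matrix.invertibleTranspose L
  have hUut : U.BlockTriangular (id : Fin n → Fin n) := fun i j hij =>
    LDL.lowerInv_triangular hS hij
  have hUdet : IsUnit U.det := (isUnit_of_invertible U).map (MonoidHom.id _) |>.map detMonoidHom
  set d := LDL.diagEntries hS with hd
  have hDdiag : LDL.diag hS = diagonal d := by
    ext i j
    rcases eq_or_ne i j with rfl | h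
    · simp [LDL.diag, diagonal_apply_eq, hd]
    · simp [LDL.diag, diagonal_apply_ne _ h, h]
  have hDconj : diagonal d = Uᵀ * S * U := by
    have h := LDL.diag_eq_lowerInv_conj hS
    rw [hDdiag] at h
    rw [h, conjTranspose_eq_transpose_of_trivial, hUdef, transpose_transpose]
  have hdpos : ∀ i, 0 < d i :=
    posDef_diagonal_iff.mp (hDconj ▸ posDef_conj_aux hS hUdet)
  set B0 : Matrix (Fin n) (Fin n) ℝ := diagonal (fun i => Real.sqrt (d i)) * U⁻¹ with hB0
  have hUinvUt : (U⁻¹).BlockTriangular (id : Fin n → Fin n) :=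
    blockTriangular_inv_of_blockTriangular hUut
  have hB0ut : B0.BlockTriangular (id : Fin n → Fin n) :=
    (blockTriangular_diagonal _).mul hUinvUt
  have hB0S : B0ᵀ * B0 = S := by
    have hsq : diagonal (fun i => Real.sqrt (d i)) * diagonal (fun i => Real.sqrt (d i))
        = diagonal d := by
      have hfun : (fun i => Real.sqrt (d i) * Real.sqrt (d i)) = d :=
        funext fun i => Real.mul_self_sqrt (hdpos i).le
      rw [diagonal_mul_diagonal, hfun]
    rw [hB0, transpose_mul, transpose_nonsing_inv, diagonal_transpose]
    calc (Uᵀ)⁻¹ * diagonal (fun i => Real.sqrt (d i)) *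
          (diagonal (fun i => Real.sqrt (d i)) * U⁻¹)
        = (Uᵀ)⁻¹ * (diagonal (fun i => Real.sqrt (d i)) *
            diagonal (fun i => Real.sqrt (d i))) * U⁻¹ := by
          simp only [Matrix.mul_assoc]
      _ = (Uᵀ)⁻¹ * (Uᵀ * S * U) * U⁻¹ := by rw [hsq, hDconj]
      _ = ((Uᵀ)⁻¹ * Uᵀ) * S * (U * U⁻¹) := by simp only [Matrix.mul_assoc]
      _ = S := by
          rw [nonsing_inv_mul _ (by rwa [det_transpose]), mul_nonsing_inv _ hUdet,
            Matrix.one_mul, Matrix.mul_one]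
  -- fix the signs of the diagonal
  have hB0det : B0.det ≠ 0 := by
    intro h0
    have : S.det = 0 := by rw [← hB0S, det_mul, det_transpose, h0, mul_zero]
    exact (hS.det_pos.ne' this)
  have hB0diag : ∀ i, B0 i i ≠ 0 := by
    intro i hi
    apply hB0det
    rw [det_of_upperTriangular hB0ut]
    exact Finset.prod_eq_zero (Finset.mem_univ i) hi
  set ε : Fin n → ℝ := fun i => if 0 < B0 i i then 1 else -1 with hε
  have hεsq : ∀ i, ε i * ε i = 1 := by
    intro i; by_cases h : 0 < B0 i i <;> simp [hε, h]
  refine ⟨diagonal ε * B0, (blockTriangular_diagonal _).mul hB0ut, fun i => ?_, ?_⟩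
  · rw [diagonal_mul]
    rcases lt_trichotomy (B0 i i) 0 with h | h | h
    · simp only [hε, if_neg (not_lt.mpr h.le)]
      nlinarith
    · exact absurd h (hB0diag i)
    · simp only [hε, if_pos h, one_mul]; exact h
  · rw [transpose_mul, diagonal_transpose, Matrix.mul_assoc, ← Matrix.mul_assoc (diagonal ε),
      diagonal_mul_diagonal]
    have : (fun i => ε i * ε i) = fun _ => (1:ℝ) := funext hεsq
    rw [this, diagonal_one, Matrix.one_mul, hB0S]

/-- Uniqueness of the Cholesky factor. -/
lemma chol_unique {B C : Matrix (Fin n) (Fin n) ℝ}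
    (hBut : B.BlockTriangular (id : Fin n → Fin n)) (hBpos : ∀ i, 0 < B i i)
    (hCut : C.BlockTriangular (id : Fin n → Fin n)) (hCpos : ∀ i, 0 < C i i)
    (h : Bᵀ * B = Cᵀ * C) : B = C := by
  have hBdet : IsUnit B.det := by
    rw [det_of_upperTriangular hBut]
    exact (Finset.prod_pos fun i _ => hBpos i).ne'.isUnit
  haveI := B.invertibleOfIsUnitDet hBdet
  set M := C * B⁻¹ with hM
  have hMut : M.BlockTriangular (id : Fin n → Fin n) :=
    hCut.mul (blockTriangular_inv_of_blockTriangular hBut)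
  have hMo : Mᵀ * M = 1 := by
    rw [hM, transpose_mul, transpose_nonsing_inv]
    calc (Bᵀ)⁻¹ * Cᵀ * (C * B⁻¹) = (Bᵀ)⁻¹ * (Cᵀ * C) * B⁻¹ := by
          simp only [Matrix.mul_assoc]
      _ = (Bᵀ)⁻¹ * (Bᵀ * B) * B⁻¹ := by rw [h]
      _ = ((Bᵀ)⁻¹ * Bᵀ) * (B * B⁻¹) := by simp only [Matrix.mul_assoc]
      _ = 1 := by
          rw [nonsing_inv_mul _ (by rwa [det_transpose]), mul_nonsing_inv _ hBdet,
            Matrix.one_mul]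
  haveI : Invertible M := invertibleOfLeftInverse _ _ hMo
  have hMinv : M⁻¹ = Mᵀ := inv_eq_left_inv hMo
  have hMinvUt : (M⁻¹).BlockTriangular (id : Fin n → Fin n) :=
    blockTriangular_inv_of_blockTriangular hMut
  have hMdiagonal : ∀ i j : Fin n, i ≠ j → M i j = 0 := by
    intro i j hij
    rcases lt_or_gt_of_ne hij with hlt | hgt
    · have := hMinvUt (show (id i : Fin n) < id j from hlt)
      rw [hMinv] at this
      exact this
    · exact hMut hgt
  have hCMB : C = M * B := by
    rw [hM, Matrix.mul_assoc, nonsing_inv_mul _ hBdet, Matrix.mul_one]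
  have hMdiagpos : ∀ i, 0 < M i i := by
    intro i
    have hCi : C i i = M i i * B i i := by
      rw [hCMB, mul_apply]
      rw [Finset.sum_eq_single i (fun k _ hk => by rw [hMdiagonal i k (Ne.symm hk), zero_mul])
        (fun hmem => absurd (Finset.mem_univ i) hmem)]
    have hC := hCpos i
    rw [hCi] at hC
    rcases mul_pos_iff.mp hC with ⟨h1, _⟩ | ⟨_, h2⟩
    · exact h1
    · exact absurd (hBpos i) (not_lt.mpr h2.le)
  have hMone : ∀ i, M i i = 1 := by
    intro i
    have h1 : (Mᵀ * M) i i = 1 := by rw [hMo, one_apply_eq]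
    rw [mul_apply] at h1
    rw [Finset.sum_eq_single i (fun k _ hk => by
      rw [transpose_apply, hMdiagonal k i hk, zero_mul])
      (fun hmem => absurd (Finset.mem_univ i) hmem), transpose_apply] at h1
    have := hMdiagpos i
    nlinarith
  have hMeq : M = 1 := by
    ext i j
    rcases eq_or_ne i j with rfl | hij
    · rw [hMone, one_apply_eq]
    · rw [hMdiagonal i j hij, one_apply_ne hij]
  rw [hCMB, hMeq, Matrix.one_mul]

/-- Iwasawa decomposition of `SL(n,ℝ)`: every `g` with `det g = 1` factors uniquely
as `g = k · a · u` with `k ∈ SO(n)`, `a` diagonal with positive entries and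
determinant `1`, and `u` upper triangular with unit diagonal. -/
theorem iwasawa_decomposition_SL (n : ℕ) (g : Matrix (Fin n) (Fin n) ℝ)
    (hg : g.det = 1) :
    ∃! kau : Matrix (Fin n) (Fin n) ℝ × Matrix (Fin n) (Fin n) ℝ ×
        Matrix (Fin n) (Fin n) ℝ,
      -- `k ∈ SO(n)`
      (kau.1ᵀ * kau.1 = 1 ∧ kau.1.det = 1) ∧
      -- `a` is diagonal with positive diagonal entries and determinant 1
      ((∀ i j, i ≠ j → kau.2.1 i j = 0) ∧ (∀ i, 0 < kau.2.1 i i) ∧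
        kau.2.1.det = 1) ∧
      -- `u` is upper triangular with all diagonal entries equal to 1
      ((∀ i j : Fin n, (j : ℕ) < (i : ℕ) → kau.2.2 i j = 0) ∧
        (∀ i, kau.2.2 i i = 1)) ∧
      g = kau.1 * kau.2.1 * kau.2.2 := by
  have hgu : IsUnit g.det := by rw [hg]; exact isUnit_one
  have hS : (gᵀ * g).PosDef := by
    have h := posDef_conj_aux (Matrix.PosDef.one (n := Fin n) (R := ℝ)) hgu
    rwa [Matrix.mul_one] at h
  obtain ⟨B, hBut, hBpos, hBS⟩ := chol_exists _ hS
  have hBdet : IsUnit B.det := by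
    rw [det_of_upperTriangular hBut]
    exact (Finset.prod_pos fun i _ => hBpos i).ne'.isUnit
  set a : Matrix (Fin n) (Fin n) ℝ := diagonal (fun i => B i i) with ha
  set ainv : Matrix (Fin n) (Fin n) ℝ := diagonal (fun i => (B i i)⁻¹) with hainv
  set u : Matrix (Fin n) (Fin n) ℝ := ainv * B with hu
  set k : Matrix (Fin n) (Fin n) ℝ := g * B⁻¹ with hk
  have hainva : ainv * a = 1 := by
    rw [hainv, ha, diagonal_mul_diagonal]
    have : (fun i => (B i i)⁻¹ * B i i) = fun _ => (1:ℝ) :=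
      funext fun i => inv_mul_cancel₀ (hBpos i).ne'
    rw [this, diagonal_one]
  have hau : a * u = B := by
    rw [hu, ← Matrix.mul_assoc, ha, hainv, diagonal_mul_diagonal]
    have : (fun i => B i i * (B i i)⁻¹) = fun _ => (1:ℝ) :=
      funext fun i => mul_inv_cancel₀ (hBpos i).ne'
    rw [this, diagonal_one, Matrix.one_mul]
  have hkB : k * B = g := by
    rw [hk, Matrix.mul_assoc, nonsing_inv_mul _ hBdet, Matrix.mul_one]
  have hgkau : g = k * a * u := by rw [Matrix.mul_assoc, hau, hkB]
  have hko : kᵀ * k = 1 := by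
    rw [hk, transpose_mul, transpose_nonsing_inv]
    calc (Bᵀ)⁻¹ * gᵀ * (g * B⁻¹) = (Bᵀ)⁻¹ * (gᵀ * g) * B⁻¹ := by
          simp only [Matrix.mul_assoc]
      _ = (Bᵀ)⁻¹ * (Bᵀ * B) * B⁻¹ := by rw [hBS]
      _ = ((Bᵀ)⁻¹ * Bᵀ) * (B * B⁻¹) := by simp only [Matrix.mul_assoc]
      _ = 1 := by
          rw [nonsing_inv_mul _ (by rwa [det_transpose]), mul_nonsing_inv _ hBdet,
            Matrix.one_mul]
  have huut : u.BlockTriangular (id : Fin n → Fin n) :=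
    (blockTriangular_diagonal _).mul hBut
  have hudiag : ∀ i, u i i = 1 := by
    intro i
    rw [hu, hainv, diagonal_mul]
    exact inv_mul_cancel₀ (hBpos i).ne'
  have hudet : u.det = 1 := by
    rw [det_of_upperTriangular huut]
    exact Finset.prod_eq_one fun i _ => hudiag i
  have hadetpos : 0 < a.det := by
    rw [ha, det_diagonal]
    exact Finset.prod_pos fun i _ => hBpos i
  have hdets : k.det * a.det = 1 := by
    have h1 := congrArg Matrix.det hgkau
    rw [hg, det_mul, det_mul, hudet, mul_one] at h1
    exact h1.symm
  have hkdet : k.det = 1 := by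
    have h2 : k.det * k.det = 1 := by
      have := congrArg Matrix.det hko
      rwa [det_mul, det_transpose, det_one] at this
    rcases mul_self_eq_one_iff.mp h2 with h | h
    · exact h
    · exfalso
      rw [h, neg_one_mul, neg_eq_iff_eq_neg] at hdets
      linarith
  have hadet : a.det = 1 := by rwa [hkdet, one_mul] at hdets
  refine ⟨(k, a, u), ⟨⟨hko, hkdet⟩, ⟨?_, ?_, hadet⟩, ⟨?_, hudiag⟩, hgkau⟩, ?_⟩
  · intro i j hij
    exact diagonal_apply_ne _ hij
  · intro i
    show (0:ℝ) < a i i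
    rw [ha, diagonal_apply_eq]
    exact hBpos i
  · intro i j hji
    exact huut (show (id j : Fin n) < id i from hji)
  · rintro ⟨k', a', u'⟩ ⟨⟨hk'o, hk'det⟩, ⟨ha'od, ha'pos, ha'det⟩, ⟨hu'lt, hu'diag⟩, hg'⟩
    dsimp only at hk'o hk'det ha'od ha'pos ha'det hu'lt hu'diag hg'
    set C : Matrix (Fin n) (Fin n) ℝ := a' * u' with hC
    have hCut : C.BlockTriangular (id : Fin n → Fin n) := by
      intro i j hij
      rw [hC, mul_apply]
      apply Finset.sum_eq_zero
      intro x _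
      rcases eq_or_ne i x with rfl | hx
      · rw [hu'lt i j hij, mul_zero]
      · rw [ha'od i x hx, zero_mul]
    have hCdiag : ∀ i, C i i = a' i i := by
      intro i
      rw [hC, mul_apply]
      rw [Finset.sum_eq_single i (fun x _ hx => by rw [ha'od i x (Ne.symm hx), zero_mul])
        (fun hmem => absurd (Finset.mem_univ i) hmem), hu'diag, mul_one]
    have hCpos : ∀ i, 0 < C i i := fun i => (hCdiag i) ▸ ha'pos i
    have hCS : Cᵀ * C = Bᵀ * B := by
      have hgC : g = k' * C := by rw [hg', hC, Matrix.mul_assoc]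
      calc Cᵀ * C = Cᵀ * (k'ᵀ * k') * C := by rw [hk'o, Matrix.mul_one]
        _ = (k' * C)ᵀ * (k' * C) := by
              rw [transpose_mul k' C]; simp only [Matrix.mul_assoc]
        _ = gᵀ * g := by rw [← hgC]
        _ = Bᵀ * B := hBS.symm
    have hCB : C = B := chol_unique hCut hCpos hBut hBpos hCS
    have ha' : a' = a := by
      ext i j
      rcases eq_or_ne i j with rfl | hij
      · rw [ha, diagonal_apply_eq, ← hCdiag i, hCB]
      · rw [ha'od i j hij, ha, diagonal_apply_ne _ hij]
    have hu' : u' = u := by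
      have hauu : a * u' = a * u := by
        rw [hau, ← hCB, hC, ha']
      calc u' = (ainv * a) * u' := by rw [hainva, Matrix.one_mul]
        _ = ainv * (a * u') := by rw [Matrix.mul_assoc]
        _ = ainv * (a * u) := by rw [hauu]
        _ = (ainv * a) * u := by rw [Matrix.mul_assoc]
        _ = u := by rw [hainva, Matrix.one_mul]
    have hk' : k' = k := by
      have hgB : k' * B = g := by
        rw [← hCB, hC, ← Matrix.mul_assoc]
        exact hg'.symm
      have := congrArg (· * B⁻¹) (hgB.trans hkB.symm)
      simpa only [Matrix.mul_assoc, mul_nonsing_inv _ hBdet, Matrix.mul_one] using this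
    exact Prod.ext hk' (Prod.ext ha' hu')
end
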